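/- arXiv:2310.10576 — 2 statements merged into one kernel-verified Lean document; each statement's English description precedes it below -/
import Mathlib

section
/- In an implicative algebra, the implicative disjunction a + b satisfies introduction and elimination up to the separator: there exist j1, j2 ∈ Σ with j1 ≤ ⋀_{a,b}(a → a+b), j2 ≤ ⋀_{a,b}(b → a+b), and for every c ∈ A, (a+b) ≤ ((a→c) → ((b→c) → c)). -/
universe u v

/-- An implicative algebra: a complete lattice with an implication antitone in the
first argument, monotone in the second, distributing over arbitrary meets in the
second argument, together with a separator `Sep` which is upward closed, closed
under modus ponens, and contains the combinators K and S. -/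
structure ImplicativeAlgebra (A : Type u) [CompleteLattice A] where
  imp : A → A → A
  imp_anti : ∀ ⦃a a' b : A⦄, a ≤ a' → imp a' b ≤ imp a b
  imp_mono : ∀ ⦃a b b' : A⦄, b ≤ b' → imp a b ≤ imp a b'
  imp_sInf : ∀ (a : A) (S : Set A), imp a (sInf S) = ⨅ b ∈ S, imp a b
  Sep : Set A
  sep_upward : ∀ ⦃a b : A⦄, a ∈ Sep → a ≤ b → b ∈ Sep
  sep_mp : ∀ ⦃a b : A⦄, imp a b ∈ Sep → a ∈ Sep → b ∈ Sep
  sep_K : (⨅ a : A, ⨅ b : A, imp a (imp b a)) ∈ Sep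
  sep_S : (⨅ a : A, ⨅ b : A, ⨅ c : A,
      imp (imp a (imp b c)) (imp (imp a b) (imp a c))) ∈ Sep

namespace ImplicativeAlgebra

variable {A : Type u} [CompleteLattice A] (𝔸 : ImplicativeAlgebra A)

/-- Application: `a · b := ⋀ {x | a ≤ b → x}`. -/
def app (a b : A) : A := sInf {x : A | a ≤ 𝔸.imp b x}

/-- Implicative conjunction `a × b`. -/
def itimes (a b : A) : A := ⨅ x : A, 𝔸.imp (𝔸.imp a (𝔸.imp b x)) x

/-- Implicative disjunction `a + b`. -/
def iplus (a b : A) : A := ⨅ x : A, 𝔸.imp (𝔸.imp a x) (𝔸.imp (𝔸.imp b x) x)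

/-- Second-order encoding of the existential quantifier. -/
def iexists {ι : Sort v} (f : ι → A) : A := ⨅ x : A, 𝔸.imp (⨅ i, 𝔸.imp (f i) x) x

/-- Encoding of k = λx.λy.x. -/
def kComb : A := ⨅ a : A, 𝔸.imp a (⨅ b : A, 𝔸.imp b a)

/-- Encoding of λx.λy.y. -/
def kbarComb : A := ⨅ a : A, 𝔸.imp a (⨅ b : A, 𝔸.imp b b)

/-- Encoding of the pairing combinator p = λx.λy.λz.zxy. -/
def pComb : A := ⨅ a : A, 𝔸.imp a (⨅ b : A, 𝔸.imp b (⨅ c : A, 𝔸.imp c (𝔸.app (𝔸.app c a) b)))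

/-- Encoding of the first projection p₁ = λu.u k. -/
def p1Comb : A := ⨅ u : A, 𝔸.imp u (𝔸.app u 𝔸.kComb)

/-- Encoding of the second projection p₂ = λv.v k̄. -/
def p2Comb : A := ⨅ u : A, 𝔸.imp u (𝔸.app u 𝔸.kbarComb)

/-- Encoding of the existential-introduction combinator e = λx.λz.zx. -/
def eComb : A := ⨅ a : A, 𝔸.imp a (⨅ c : A, 𝔸.imp c (𝔸.app c a))

end ImplicativeAlgebra


namespace ImplicativeAlgebra

variable {A : Type u} [CompleteLattice A] (𝔸 : ImplicativeAlgebra A)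

lemma le_imp_app (a b : A) : a ≤ 𝔸.imp b (𝔸.app a b) := by
  have : 𝔸.app a b = sInf {x : A | a ≤ 𝔸.imp b x} := rfl
  rw [this, 𝔸.imp_sInf]
  exact le_iInf₂ fun x hx => hx

lemma app_le {a b c : A} (h : a ≤ 𝔸.imp b c) : 𝔸.app a b ≤ c := sInf_le h

lemma app_typed {f g x y : A} (hf : f ≤ 𝔸.imp x y) (hg : g ≤ x) :
    𝔸.app f g ≤ y := 𝔸.app_le (hf.trans (𝔸.imp_anti hg))

lemma app_sep {a b : A} (ha : a ∈ 𝔸.Sep) (hb : b ∈ 𝔸.Sep) : 𝔸.app a b ∈ 𝔸.Sep :=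
  𝔸.sep_mp (𝔸.sep_upward ha (𝔸.le_imp_app a b)) hb

/-- the K element -/
def kEl : A := ⨅ a : A, ⨅ b : A, 𝔸.imp a (𝔸.imp b a)

lemma kEl_mem : 𝔸.kEl ∈ 𝔸.Sep := 𝔸.sep_K

lemma kEl_le (a b : A) : 𝔸.kEl ≤ 𝔸.imp a (𝔸.imp b a) :=
  (iInf_le _ a).trans (iInf_le _ b)

/-- the S element -/
def sEl : A := ⨅ a : A, ⨅ b : A, ⨅ c : A,
    𝔸.imp (𝔸.imp a (𝔸.imp b c)) (𝔸.imp (𝔸.imp a b) (𝔸.imp a c))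

lemma sEl_mem : 𝔸.sEl ∈ 𝔸.Sep := 𝔸.sep_S

lemma sEl_le (a b c : A) : 𝔸.sEl ≤
    𝔸.imp (𝔸.imp a (𝔸.imp b c)) (𝔸.imp (𝔸.imp a b) (𝔸.imp a c)) :=
  ((iInf_le _ a).trans (iInf_le _ b)).trans (iInf_le _ c)

/-- I = S K K -/
def iEl : A := 𝔸.app (𝔸.app 𝔸.sEl 𝔸.kEl) 𝔸.kEl

lemma iEl_mem : 𝔸.iEl ∈ 𝔸.Sep :=
  𝔸.app_sep (𝔸.app_sep 𝔸.sEl_mem 𝔸.kEl_mem) 𝔸.kEl_mem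

lemma iEl_le (a : A) : 𝔸.iEl ≤ 𝔸.imp a a :=
  𝔸.app_typed (𝔸.app_typed (𝔸.sEl_le a (𝔸.imp a a) a) (𝔸.kEl_le a (𝔸.imp a a)))
    (𝔸.kEl_le a a)

/-- B = S (K S) K, the composition combinator -/
def bEl : A := 𝔸.app (𝔸.app 𝔸.sEl (𝔸.app 𝔸.kEl 𝔸.sEl)) 𝔸.kEl

lemma bEl_mem : 𝔸.bEl ∈ 𝔸.Sep :=
  𝔸.app_sep (𝔸.app_sep 𝔸.sEl_mem (𝔸.app_sep 𝔸.kEl_mem 𝔸.sEl_mem)) 𝔸.kEl_mem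

lemma bEl_le (x y z : A) : 𝔸.bEl ≤
    𝔸.imp (𝔸.imp y z) (𝔸.imp (𝔸.imp x y) (𝔸.imp x z)) := by
  set P := 𝔸.imp y z
  have hKS : 𝔸.app 𝔸.kEl 𝔸.sEl ≤
      𝔸.imp P (𝔸.imp (𝔸.imp x P) (𝔸.imp (𝔸.imp x y) (𝔸.imp x z))) :=
    𝔸.app_typed (𝔸.kEl_le _ P) (𝔸.sEl_le x y z)
  have h1 : 𝔸.app 𝔸.sEl (𝔸.app 𝔸.kEl 𝔸.sEl) ≤
      𝔸.imp (𝔸.imp P (𝔸.imp x P)) (𝔸.imp P (𝔸.imp (𝔸.imp x y) (𝔸.imp x z))) :=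
    𝔸.app_typed (𝔸.sEl_le P (𝔸.imp x P) (𝔸.imp (𝔸.imp x y) (𝔸.imp x z))) hKS
  exact 𝔸.app_typed h1 (𝔸.kEl_le P x)

/-- E = λx.λz.zx = S (K (S I)) (S (K K) I) -/
def eEl : A :=
  𝔸.app (𝔸.app 𝔸.sEl (𝔸.app 𝔸.kEl (𝔸.app 𝔸.sEl 𝔸.iEl)))
    (𝔸.app (𝔸.app 𝔸.sEl (𝔸.app 𝔸.kEl 𝔸.kEl)) 𝔸.iEl)

lemma eEl_mem : 𝔸.eEl ∈ 𝔸.Sep := by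
  have hs := 𝔸.sEl_mem; have hk := 𝔸.kEl_mem; have hi := 𝔸.iEl_mem
  exact 𝔸.app_sep (𝔸.app_sep hs (𝔸.app_sep hk (𝔸.app_sep hs hi)))
    (𝔸.app_sep (𝔸.app_sep hs (𝔸.app_sep hk hk)) hi)

lemma eEl_le (a c : A) : 𝔸.eEl ≤ 𝔸.imp a (𝔸.imp (𝔸.imp a c) c) := by
  set D := 𝔸.imp a c
  have hSI : 𝔸.app 𝔸.sEl 𝔸.iEl ≤ 𝔸.imp (𝔸.imp D a) (𝔸.imp D c) :=
    𝔸.app_typed (𝔸.sEl_le D a c) (𝔸.iEl_le D)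
  have hKSI : 𝔸.app 𝔸.kEl (𝔸.app 𝔸.sEl 𝔸.iEl) ≤
      𝔸.imp a (𝔸.imp (𝔸.imp D a) (𝔸.imp D c)) :=
    𝔸.app_typed (𝔸.kEl_le _ a) hSI
  have hKK : 𝔸.app 𝔸.kEl 𝔸.kEl ≤ 𝔸.imp a (𝔸.imp a (𝔸.imp D a)) :=
    𝔸.app_typed (𝔸.kEl_le _ a) (𝔸.kEl_le a D)
  have hQ : 𝔸.app (𝔸.app 𝔸.sEl (𝔸.app 𝔸.kEl 𝔸.kEl)) 𝔸.iEl ≤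
      𝔸.imp a (𝔸.imp D a) :=
    𝔸.app_typed (𝔸.app_typed (𝔸.sEl_le a a (𝔸.imp D a)) hKK) (𝔸.iEl_le a)
  exact 𝔸.app_typed
    (𝔸.app_typed (𝔸.sEl_le a (𝔸.imp D a) (𝔸.imp D c)) hKSI) hQ

lemma le_imp_iInf {ι : Sort v} {s a : A} {f : ι → A}
    (h : ∀ i, s ≤ 𝔸.imp a (f i)) : s ≤ 𝔸.imp a (⨅ i, f i) := by
  rw [← sInf_range, 𝔸.imp_sInf]
  exact le_iInf₂ fun x hx => by obtain ⟨i, rfl⟩ := hx; exact h i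

end ImplicativeAlgebra

/-- implicative disjunction satisfies introduction and elimination
up to the separator. -/
theorem iplus_intro_elim {A : Type u} [CompleteLattice A]
    (𝔸 : ImplicativeAlgebra A) :
    ∃ j1 ∈ 𝔸.Sep, ∃ j2 ∈ 𝔸.Sep,
      j1 ≤ (⨅ a : A, ⨅ b : A, 𝔸.imp a (𝔸.iplus a b)) ∧
      j2 ≤ (⨅ a : A, ⨅ b : A, 𝔸.imp b (𝔸.iplus a b)) ∧
      ∀ a b c : A, 𝔸.iplus a b ≤ 𝔸.imp (𝔸.imp a c) (𝔸.imp (𝔸.imp b c) c) := by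
  classical
  set j1 : A := 𝔸.app (𝔸.app 𝔸.bEl (𝔸.app 𝔸.bEl 𝔸.kEl)) 𝔸.eEl with hj1
  set j2 : A := 𝔸.app (𝔸.app 𝔸.bEl 𝔸.kEl) 𝔸.eEl with hj2
  refine ⟨j1, ?_, j2, ?_, ?_, ?_, ?_⟩
  · exact 𝔸.app_sep (𝔸.app_sep 𝔸.bEl_mem (𝔸.app_sep 𝔸.bEl_mem 𝔸.kEl_mem)) 𝔸.eEl_mem
  · exact 𝔸.app_sep (𝔸.app_sep 𝔸.bEl_mem 𝔸.kEl_mem) 𝔸.eEl_mem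
  · refine le_iInf fun a => le_iInf fun b => ?_
    unfold ImplicativeAlgebra.iplus
    refine 𝔸.le_imp_iInf fun c => ?_
    have hBK : 𝔸.app 𝔸.bEl 𝔸.kEl ≤
        𝔸.imp (𝔸.imp (𝔸.imp a c) c)
          (𝔸.imp (𝔸.imp a c) (𝔸.imp (𝔸.imp b c) c)) :=
      𝔸.app_typed (𝔸.bEl_le (𝔸.imp a c) c (𝔸.imp (𝔸.imp b c) c))
        (𝔸.kEl_le c (𝔸.imp b c))
    have hO : 𝔸.app 𝔸.bEl (𝔸.app 𝔸.bEl 𝔸.kEl) ≤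
        𝔸.imp (𝔸.imp a (𝔸.imp (𝔸.imp a c) c))
          (𝔸.imp a (𝔸.imp (𝔸.imp a c) (𝔸.imp (𝔸.imp b c) c))) :=
      𝔸.app_typed (𝔸.bEl_le a (𝔸.imp (𝔸.imp a c) c)
        (𝔸.imp (𝔸.imp a c) (𝔸.imp (𝔸.imp b c) c))) hBK
    exact 𝔸.app_typed hO (𝔸.eEl_le a c)
  · refine le_iInf fun a => le_iInf fun b => ?_
    unfold ImplicativeAlgebra.iplus
    refine 𝔸.le_imp_iInf fun c => ?_
    have hBK : 𝔸.app 𝔸.bEl 𝔸.kEl ≤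
        𝔸.imp (𝔸.imp b (𝔸.imp (𝔸.imp b c) c))
          (𝔸.imp b (𝔸.imp (𝔸.imp a c) (𝔸.imp (𝔸.imp b c) c))) :=
      𝔸.app_typed (𝔸.bEl_le b (𝔸.imp (𝔸.imp b c) c)
        (𝔸.imp (𝔸.imp a c) (𝔸.imp (𝔸.imp b c) c)))
        (𝔸.kEl_le (𝔸.imp (𝔸.imp b c) c) (𝔸.imp a c))
    exact 𝔸.app_typed hBK (𝔸.eEl_le b c)
  · intro a b c
    exact iInf_le _ c
end

section
/- In an implicative algebra, the encoded existential quantifier satisfies: e := λx.λz.zx satisfies e ∈ Σ and e ≤ a_j → ⟆∃_{i∈I} a_i for every j ∈ I, and ⟆∃_{i∈I} a_i ≤ (⋀_{i∈I}(a_i → b)) → b for every b ∈ A. -/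
universe u v

section Aux

variable {A : Type u} [CompleteLattice A] (𝔸 : ImplicativeAlgebra A)

lemma aux_app_le {a b c : A} (h : a ≤ 𝔸.imp b c) : 𝔸.app a b ≤ c := sInf_le h

lemma aux_le_imp_app (a b : A) : a ≤ 𝔸.imp b (𝔸.app a b) := by
  rw [ImplicativeAlgebra.app, 𝔸.imp_sInf]
  exact le_iInf₂ fun x hx => hx

lemma aux_le_imp_of_app_le {a b c : A} (h : 𝔸.app a b ≤ c) : a ≤ 𝔸.imp b c :=
  (aux_le_imp_app 𝔸 a b).trans (𝔸.imp_mono h)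

lemma aux_app_mono {a a' b b' : A} (ha : a ≤ a') (hb : b ≤ b') :
    𝔸.app a b ≤ 𝔸.app a' b' :=
  aux_app_le 𝔸 <| ha.trans <| (aux_le_imp_app 𝔸 a' b').trans (𝔸.imp_anti hb)

lemma aux_app_sep {a b : A} (ha : a ∈ 𝔸.Sep) (hb : b ∈ 𝔸.Sep) :
    𝔸.app a b ∈ 𝔸.Sep :=
  𝔸.sep_mp (𝔸.sep_upward ha (aux_le_imp_app 𝔸 a b)) hb

/-- The K combinator in the form appearing in `sep_K`. -/
def auxK : A := ⨅ a : A, ⨅ b : A, 𝔸.imp a (𝔸.imp b a)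

/-- The S combinator in the form appearing in `sep_S`. -/
def auxS : A := ⨅ a : A, ⨅ b : A, ⨅ c : A,
    𝔸.imp (𝔸.imp a (𝔸.imp b c)) (𝔸.imp (𝔸.imp a b) (𝔸.imp a c))

lemma auxK_le (a b : A) : auxK 𝔸 ≤ 𝔸.imp a (𝔸.imp b a) :=
  (iInf_le _ a).trans (iInf_le _ b)

lemma auxK_red (a b : A) : 𝔸.app (𝔸.app (auxK 𝔸) a) b ≤ a :=
  aux_app_le 𝔸 (aux_app_le 𝔸 (auxK_le 𝔸 a b))

lemma auxS_red (f g x : A) :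
    𝔸.app (𝔸.app (𝔸.app (auxS 𝔸) f) g) x ≤ 𝔸.app (𝔸.app f x) (𝔸.app g x) := by
  set T := 𝔸.app (𝔸.app f x) (𝔸.app g x) with hT
  apply aux_app_le; apply aux_app_le; apply aux_app_le
  have hS : auxS 𝔸 ≤ 𝔸.imp (𝔸.imp x (𝔸.imp (𝔸.app g x) T))
      (𝔸.imp (𝔸.imp x (𝔸.app g x)) (𝔸.imp x T)) :=
    ((iInf_le _ x).trans (iInf_le _ (𝔸.app g x))).trans (iInf_le _ T)
  have hf : f ≤ 𝔸.imp x (𝔸.imp (𝔸.app g x) T) :=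
    (aux_le_imp_app 𝔸 f x).trans (𝔸.imp_mono (aux_le_imp_app 𝔸 (𝔸.app f x) (𝔸.app g x)))
  have hg : g ≤ 𝔸.imp x (𝔸.app g x) := aux_le_imp_app 𝔸 g x
  exact (hS.trans (𝔸.imp_anti hf)).trans (𝔸.imp_mono (𝔸.imp_anti hg))

/-- I = S K K. -/
def auxI : A := 𝔸.app (𝔸.app (auxS 𝔸) (auxK 𝔸)) (auxK 𝔸)

lemma auxI_red (x : A) : 𝔸.app (auxI 𝔸) x ≤ x :=
  (auxS_red 𝔸 _ _ x).trans (auxK_red 𝔸 x _)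

/-- t = S (K (S I)) K, an SK-encoding of λx.λz.zx. -/
def auxT : A :=
  𝔸.app (𝔸.app (auxS 𝔸) (𝔸.app (auxK 𝔸) (𝔸.app (auxS 𝔸) (auxI 𝔸)))) (auxK 𝔸)

lemma auxT_sep : auxT 𝔸 ∈ 𝔸.Sep := by
  have hK := 𝔸.sep_K
  have hS := 𝔸.sep_S
  exact aux_app_sep 𝔸
    (aux_app_sep 𝔸 hS
      (aux_app_sep 𝔸 hK (aux_app_sep 𝔸 hS (aux_app_sep 𝔸 (aux_app_sep 𝔸 hS hK) hK)))) hK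

lemma auxT_red (a c : A) : 𝔸.app (𝔸.app (auxT 𝔸) a) c ≤ 𝔸.app c a := by
  have h1 : 𝔸.app (auxT 𝔸) a ≤ 𝔸.app (𝔸.app (auxS 𝔸) (auxI 𝔸)) (𝔸.app (auxK 𝔸) a) :=
    (auxS_red 𝔸 _ _ a).trans (aux_app_mono 𝔸 (auxK_red 𝔸 _ a) le_rfl)
  calc 𝔸.app (𝔸.app (auxT 𝔸) a) c
      ≤ 𝔸.app (𝔸.app (𝔸.app (auxS 𝔸) (auxI 𝔸)) (𝔸.app (auxK 𝔸) a)) c :=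
        aux_app_mono 𝔸 h1 le_rfl
    _ ≤ 𝔸.app (𝔸.app (auxI 𝔸) c) (𝔸.app (𝔸.app (auxK 𝔸) a) c) := auxS_red 𝔸 _ _ c
    _ ≤ 𝔸.app c a := aux_app_mono 𝔸 (auxI_red 𝔸 c) (auxK_red 𝔸 a c)

lemma auxT_le_eComb : auxT 𝔸 ≤ 𝔸.eComb := by
  refine le_iInf fun a => aux_le_imp_of_app_le 𝔸 (le_iInf fun c => ?_)
  exact aux_le_imp_of_app_le 𝔸 (auxT_red 𝔸 a c)

end Aux

/-- the combinator e = λx.λz.zx belongs to Σ, realizes the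
introduction rule of the encoded existential quantifier, and the encoded
existential quantifier satisfies its elimination rule. -/
theorem iexists_intro_elim {A : Type u} [CompleteLattice A]
    (𝔸 : ImplicativeAlgebra A) :
    𝔸.eComb ∈ 𝔸.Sep ∧
      (∀ (ι : Type v) (f : ι → A) (j : ι), 𝔸.eComb ≤ 𝔸.imp (f j) (𝔸.iexists f)) ∧
      (∀ (ι : Type v) (f : ι → A) (b : A),
        𝔸.iexists f ≤ 𝔸.imp (⨅ i, 𝔸.imp (f i) b) b) := by
  refine ⟨𝔸.sep_upward (auxT_sep 𝔸) (auxT_le_eComb 𝔸), ?_, ?_⟩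
  · intro ι f j
    refine le_trans (iInf_le _ (f j)) (𝔸.imp_mono (le_iInf fun x => ?_))
    have hc : (⨅ i, 𝔸.imp (f i) x) ≤ 𝔸.imp (f j) x := iInf_le _ j
    have happ : 𝔸.app (⨅ i, 𝔸.imp (f i) x) (f j) ≤ x := aux_app_le 𝔸 hc
    exact le_trans (iInf_le _ (⨅ i, 𝔸.imp (f i) x)) (𝔸.imp_mono happ)
  · intro ι f b
    exact iInf_le _ b
end
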